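/- arXiv:2107.14602 — 6 statements merged into one kernel-verified Lean document; each statement's English description precedes it below -/
import Mathlib

section
/- Let A be an n×m matrix with entries in {0,...,p-1} and let X be the transposition matrix swapping rows u and v (u < v). If r(XA) < r(A) in the lexicographic order, then c(XA) < c(A) in the lexicographic order. -/
def rowCode (p n m : ℕ) (A : Fin n → Fin m → Fin p) : Fin n → ℕ :=
  fun i => ∑ j : Fin m, (A i j : ℕ) * p ^ (m - 1 - (j : ℕ))

def colCode (p n m : ℕ) (A : Fin n → Fin m → Fin p) : Fin m → ℕ :=
  fun j => ∑ i : Fin n, (A i j : ℕ) * p ^ (n - 1 - (i : ℕ))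

def MatEquiv (p n m : ℕ) (A B : Fin n → Fin m → Fin p) : Prop :=
  ∃ (σ : Equiv.Perm (Fin n)) (τ : Equiv.Perm (Fin m)), ∀ i j, A i j = B (σ i) (τ j)

def Canonical (p n m : ℕ) (A : Fin n → Fin m → Fin p) : Prop :=
  ∀ B : Fin n → Fin m → Fin p, MatEquiv p n m B A →
    toLex (rowCode p n m A) ≤ toLex (rowCode p n m B)

def SemiCanonical (p n m : ℕ) (A : Fin n → Fin m → Fin p) : Prop :=
  Monotone (rowCode p n m A) ∧ Monotone (colCode p n m A)

lemma myGeomLt (p : ℕ) (hp : 2 ≤ p) (N : ℕ) : ∑ t ∈ Finset.range N, (p-1)*p^t < p^N := by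
  induction N with
  | zero => simp
  | succ N ih =>
      rw [Finset.sum_range_succ, pow_succ]
      have e : (p-1)*p^N + p^N = p^N * p := by
        have h1 : (p-1) + 1 = p := by omega
        calc (p-1)*p^N + p^N = ((p-1)+1)*p^N := by ring
        _ = p^N * p := by rw [h1]; ring
      omega

lemma tail_lt {p m : ℕ} (hp : 2 ≤ p) (f : Fin m → ℕ) (hf : ∀ k, f k < p) (j : Fin m) :
    ∑ k ∈ Finset.Ioi j, f k * p ^ (m - 1 - (k:ℕ)) < p ^ (m - 1 - (j:ℕ)) := by
  calc ∑ k ∈ Finset.Ioi j, f k * p ^ (m-1-(k:ℕ))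
      ≤ ∑ k ∈ Finset.Ioi j, (p-1) * p ^ (m-1-(k:ℕ)) :=
        Finset.sum_le_sum fun k _ => Nat.mul_le_mul_right _ (by have := hf k; omega)
    _ = ∑ t ∈ (Finset.Ioi j).image (fun k : Fin m => m-1-(k:ℕ)), (p-1)*p^t := by
        rw [Finset.sum_image]
        intro x _ y _ hxy
        have hx := x.isLt; have hy := y.isLt
        exact Fin.ext (by have hxy' : m-1-(x:ℕ) = m-1-(y:ℕ) := hxy; omega)
    _ ≤ ∑ t ∈ Finset.range (m-1-(j:ℕ)), (p-1)*p^t := by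
        apply Finset.sum_le_sum_of_subset
        intro t ht
        simp only [Finset.mem_image, Finset.mem_Ioi] at ht
        obtain ⟨k, hk, rfl⟩ := ht
        have := k.isLt
        have hjk : (j:ℕ) < (k:ℕ) := hk
        simp only [Finset.mem_range]
        omega
    _ < p ^ (m-1-(j:ℕ)) := myGeomLt p hp _

lemma sum_lt_of_lex {p m : ℕ} (hp : 2 ≤ p) (f g : Fin m → ℕ) (hf : ∀ k, f k < p)
    (j : Fin m) (hpre : ∀ k, k < j → f k = g k) (hj : f j < g j) :
    ∑ k : Fin m, f k * p ^ (m-1-(k:ℕ)) < ∑ k : Fin m, g k * p ^ (m-1-(k:ℕ)) := by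
  have huniv : (Finset.univ : Finset (Fin m)) = Finset.Iio j ∪ Finset.Ici j := by
    ext k; simp [lt_or_ge k j]
  have hdisj : Disjoint (Finset.Iio j) (Finset.Ici j) := Finset.disjoint_left.2 fun a ha hb => by simp only [Finset.mem_Iio] at ha; simp only [Finset.mem_Ici] at hb; exact absurd hb (not_le.2 ha)
  have hsplit : ∀ h : Fin m → ℕ, ∑ k : Fin m, h k * p ^ (m-1-(k:ℕ)) =
      (∑ k ∈ Finset.Iio j, h k * p ^ (m-1-(k:ℕ))) +
        (h j * p ^ (m-1-(j:ℕ)) + ∑ k ∈ Finset.Ioi j, h k * p ^ (m-1-(k:ℕ))) := by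
    intro h
    rw [huniv, Finset.sum_union hdisj, ← Finset.Ioi_insert,
      Finset.sum_insert (by simp)]
  rw [hsplit f, hsplit g]
  have hpref : ∑ k ∈ Finset.Iio j, f k * p ^ (m-1-(k:ℕ)) =
      ∑ k ∈ Finset.Iio j, g k * p ^ (m-1-(k:ℕ)) :=
    Finset.sum_congr rfl fun k hk => by rw [hpre k (Finset.mem_Iio.1 hk)]
  have htf := tail_lt hp f hf j
  have hmul : (f j + 1) * p ^ (m-1-(j:ℕ)) ≤ g j * p ^ (m-1-(j:ℕ)) :=
    Nat.mul_le_mul_right _ hj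
  have hex : (f j + 1) * p ^ (m-1-(j:ℕ)) = f j * p ^ (m-1-(j:ℕ)) + p ^ (m-1-(j:ℕ)) := by ring
  omega

lemma lex_of_sum_lt {p m : ℕ} (hp : 2 ≤ p) (f g : Fin m → ℕ) (hf : ∀ k, f k < p)
    (hg : ∀ k, g k < p)
    (h : ∑ k : Fin m, f k * p ^ (m-1-(k:ℕ)) < ∑ k : Fin m, g k * p ^ (m-1-(k:ℕ))) :
    ∃ j, (∀ k, k < j → f k = g k) ∧ f j < g j := by
  have tri := (Pi.isTrichotomous_lex (β := fun _ : Fin m => ℕ) (· < ·)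
    (fun {_} a b => a < b) (wellFounded_lt)).trichotomous f g
  rcases (or_iff_not_imp_left.2 fun h1 => or_iff_not_imp_right.2 fun h2 => tri h1 h2 :
      Pi.Lex (· < ·) (fun {_} a b => a < b) f g ∨ f = g ∨ Pi.Lex (· < ·) (fun {_} a b => a < b) g f) with hl | he | hl
  · obtain ⟨j, h1, h2⟩ := hl
    exact ⟨j, h1, h2⟩
  · subst he
    exact absurd h (lt_irrefl _)
  · obtain ⟨j, h1, h2⟩ := hl
    have := sum_lt_of_lex hp g f hg j h1 h2
    omega

lemma sum_swap_eq {n : ℕ} (u v : Fin n) (huv : u ≠ v) (F G : Fin n → ℕ)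
    (hFG : ∀ i, i ≠ u → i ≠ v → F i = G i) :
    (∑ i, F i) + (G u + G v) = (∑ i, G i) + (F u + F v) := by
  have hv : v ∈ Finset.univ.erase u := Finset.mem_erase.2 ⟨(Ne.symm huv), Finset.mem_univ _⟩
  have hF : ∑ i, F i = F u + (F v + ∑ i ∈ (Finset.univ.erase u).erase v, F i) := by
    rw [Finset.add_sum_erase _ _ hv, Finset.add_sum_erase _ _ (Finset.mem_univ u)]
  have hG : ∑ i, G i = G u + (G v + ∑ i ∈ (Finset.univ.erase u).erase v, G i) := by
    rw [Finset.add_sum_erase _ _ hv, Finset.add_sum_erase _ _ (Finset.mem_univ u)]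
  have hs : ∑ i ∈ (Finset.univ.erase u).erase v, F i =
      ∑ i ∈ (Finset.univ.erase u).erase v, G i := by
    refine Finset.sum_congr rfl fun i hi => ?_
    simp only [Finset.mem_erase] at hi
    exact hFG i hi.2.1 hi.1
  omega

/-- if swapping rows `u` and `v` (`u < v`) strictly decreases `r`
lexicographically, then it strictly decreases `c` lexicographically. -/
theorem stmt3 (p n m : ℕ) (hp : 2 ≤ p) (A : Fin n → Fin m → Fin p)
    (u v : Fin n) (huv : u < v)
    (XA : Fin n → Fin m → Fin p) (hXA : XA = fun i j => A (Equiv.swap u v i) j)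
    (h : toLex (rowCode p n m XA) < toLex (rowCode p n m A)) :
    toLex (colCode p n m XA) < toLex (colCode p n m A) := by
  subst hXA
  obtain ⟨i0, hpre, hlt⟩ := h
  have hlt2 : rowCode p n m A (Equiv.swap u v i0) < rowCode p n m A i0 := hlt
  have hpre2 : ∀ k, k < i0 → rowCode p n m A (Equiv.swap u v k) = rowCode p n m A k :=
    fun k hk => hpre k hk
  have hne : rowCode p n m A v < rowCode p n m A u := by
    rcases eq_or_ne i0 u with rfl | h1
    · rwa [Equiv.swap_apply_left] at hlt2
    · rcases eq_or_ne i0 v with rfl | h2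
      · have heq := hpre2 u huv
        rw [Equiv.swap_apply_left] at heq
        rw [Equiv.swap_apply_right] at hlt2
        omega
      · rw [Equiv.swap_apply_of_ne_of_ne h1 h2] at hlt2
        exact absurd hlt2 (lt_irrefl _)
  -- find the first column where rows u and v differ
  obtain ⟨j, hcpre, hcj⟩ := lex_of_sum_lt hp (fun k => (A v k : ℕ)) (fun k => (A u k : ℕ))
    (fun k => (A v k).isLt) (fun k => (A u k).isLt) hne
  refine ⟨j, ?_, ?_⟩
  · -- prefix columns are equal
    intro j' hj'
    show colCode p n m (fun i j => A (Equiv.swap u v i) j) j' = colCode p n m A j'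
    refine Finset.sum_congr rfl fun i _ => ?_
    show (A (Equiv.swap u v i) j' : ℕ) * p ^ (n-1-(i:ℕ)) = (A i j' : ℕ) * p ^ (n-1-(i:ℕ))
    congr 1
    rcases eq_or_ne i u with rfl | h1
    · rw [Equiv.swap_apply_left]; exact (hcpre j' hj')
    · rcases eq_or_ne i v with rfl | h2
      · rw [Equiv.swap_apply_right]; exact (hcpre j' hj').symm
      · rw [Equiv.swap_apply_of_ne_of_ne h1 h2]
  · -- strict inequality at column j
    show colCode p n m (fun i j => A (Equiv.swap u v i) j) j < colCode p n m A j
    have hvn := v.isLt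
    have huvn : (u:ℕ) < (v:ℕ) := huv
    have hw : p ^ (n-1-(v:ℕ)) < p ^ (n-1-(u:ℕ)) :=
      Nat.pow_lt_pow_right hp (by omega)
    have key := sum_swap_eq u v (Fin.ne_of_lt huv)
      (fun i => ((A (Equiv.swap u v i) j : ℕ)) * p ^ (n-1-(i:ℕ)))
      (fun i => ((A i j : ℕ)) * p ^ (n-1-(i:ℕ)))
      (fun i h1 h2 => by
        show (A (Equiv.swap u v i) j : ℕ) * p ^ (n-1-(i:ℕ)) = (A i j : ℕ) * p ^ (n-1-(i:ℕ))
        rw [Equiv.swap_apply_of_ne_of_ne h1 h2])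
    simp only [Equiv.swap_apply_left, Equiv.swap_apply_right] at key
    have hcross : (A v j : ℕ) * p ^ (n-1-(u:ℕ)) + (A u j : ℕ) * p ^ (n-1-(v:ℕ))
        < (A u j : ℕ) * p ^ (n-1-(u:ℕ)) + (A v j : ℕ) * p ^ (n-1-(v:ℕ)) := by
      have := mul_add_mul_lt_mul_add_mul hcj hw
      omega
    show (∑ i, ((A (Equiv.swap u v i) j : ℕ)) * p ^ (n-1-(i:ℕ)))
        < ∑ i, ((A i j : ℕ)) * p ^ (n-1-(i:ℕ))
    omega
end

section
/- Let A be an n×m matrix with entries in {0,...,p-1} and let Y be the transposition of columns s and t. If c(AY) < c(A) in the lexicographic order, then r(AY) < r(A) in the lexicographic order. -/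
lemma digitSum_le {p N : ℕ} (hp : 2 ≤ p) (a : Fin N → ℕ) (ha : ∀ i, a i < p) :
    ∑ i, a i * p ^ (N - 1 - (i : ℕ)) ≤ p ^ N - 1 := by
  induction N with
  | zero => simp
  | succ N ih =>
    rw [Fin.sum_univ_succ]
    have h1 : ∑ i : Fin N, a i.succ * p ^ (N + 1 - 1 - ((i.succ : Fin (N+1)) : ℕ))
        = ∑ i : Fin N, (a ∘ Fin.succ) i * p ^ (N - 1 - (i : ℕ)) := by
      apply Finset.sum_congr rfl
      intro i _
      simp only [Fin.val_succ, Function.comp_apply]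
      congr 2
      omega
    rw [h1]
    have h2 := ih (a ∘ Fin.succ) (fun i => ha i.succ)
    have h3 : a 0 * p ^ (N + 1 - 1 - ((0 : Fin (N+1)) : ℕ)) ≤ (p - 1) * p ^ N := by
      simp only [Fin.val_zero, Nat.sub_zero, Nat.add_sub_cancel]
      exact Nat.mul_le_mul_right _ (by have := ha 0; omega)
    have hpN : 1 ≤ p ^ N := Nat.one_le_pow _ _ (by omega)
    have e1 : (p - 1) * p ^ N = p * p ^ N - 1 * p ^ N := Nat.sub_mul _ _ _
    have e2 : p ^ (N + 1) = p ^ N * p := pow_succ p N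
    have e3 : p * p ^ N = p ^ N * p := mul_comm _ _
    have e4 : p ^ N ≤ p ^ N * p := Nat.le_mul_of_pos_right _ (by omega)
    omega

lemma digitSum_lt_of_lex {p N : ℕ} (hp : 2 ≤ p) (a b : Fin N → ℕ)
    (ha : ∀ i, a i < p) (i0 : Fin N)
    (heq : ∀ j, j < i0 → a j = b j) (hlt : a i0 < b i0) :
    ∑ i, a i * p ^ (N - 1 - (i : ℕ)) < ∑ i, b i * p ^ (N - 1 - (i : ℕ)) := by
  induction N with
  | zero => exact absurd i0.2 (by omega)
  | succ N ih =>
    rw [Fin.sum_univ_succ, Fin.sum_univ_succ]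
    have hrw : ∀ c : Fin (N+1) → ℕ,
        ∑ i : Fin N, c i.succ * p ^ (N + 1 - 1 - ((i.succ : Fin (N+1)) : ℕ))
        = ∑ i : Fin N, (c ∘ Fin.succ) i * p ^ (N - 1 - (i : ℕ)) := by
      intro c
      apply Finset.sum_congr rfl
      intro i _
      simp only [Fin.val_succ, Function.comp_apply]
      congr 2
      omega
    rw [hrw a, hrw b]
    rcases Fin.eq_zero_or_eq_succ i0 with h0 | ⟨j, hj⟩
    · subst h0
      simp only [Fin.val_zero, Nat.sub_zero, Nat.add_sub_cancel]
      have hA := digitSum_le hp (a ∘ Fin.succ) (fun i => ha i.succ)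
      have hpN : 1 ≤ p ^ N := Nat.one_le_pow _ _ (by omega)
      have h5 : (a 0 + 1) * p ^ N ≤ b 0 * p ^ N := Nat.mul_le_mul_right _ (by omega)
      have h6 : (a 0 + 1) * p ^ N = a 0 * p ^ N + p ^ N := by ring
      omega
    · subst hj
      have h00 : a 0 = b 0 := heq 0 (Fin.succ_pos j)
      rw [h00]
      have htail := ih (a ∘ Fin.succ) (b ∘ Fin.succ) (fun i => ha i.succ) j
        (fun i hi => heq i.succ (by simpa [Fin.succ_lt_succ_iff] using hi)) hlt
      exact Nat.add_lt_add_left htail _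

lemma exists_first_diff {p N : ℕ} (hp : 2 ≤ p) (a b : Fin N → ℕ)
    (ha : ∀ i, a i < p) (hb : ∀ i, b i < p)
    (hsum : ∑ i, a i * p ^ (N - 1 - (i : ℕ)) < ∑ i, b i * p ^ (N - 1 - (i : ℕ))) :
    ∃ i0, (∀ j, j < i0 → a j = b j) ∧ a i0 < b i0 := by
  have hne : a ≠ b := by rintro rfl; exact lt_irrefl _ hsum
  obtain ⟨i0, hi0, hmin⟩ := (wellFounded_lt (α := Fin N)).has_min { i | a i ≠ b i }
    (Function.ne_iff.1 hne)
  have heq : ∀ j, j < i0 → a j = b j := by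
    intro j hj
    by_contra hc
    exact hmin j hc hj
  refine ⟨i0, heq, ?_⟩
  rcases lt_or_ge (a i0) (b i0) with h | h
  · exact h
  · rcases lt_or_eq_of_le h with h' | h'
    · exact absurd (digitSum_lt_of_lex hp b a hb i0 (fun j hj => (heq j hj).symm) h')
        (by omega)
    · exact absurd h'.symm hi0

/-- if swapping columns `s` and `t` strictly decreases `c`
lexicographically, then it strictly decreases `r` lexicographically. -/
theorem stmt4 (p n m : ℕ) (hp : 2 ≤ p) (A : Fin n → Fin m → Fin p)
    (s t : Fin m) (hst : s ≠ t)
    (AY : Fin n → Fin m → Fin p) (hAY : AY = fun i j => A i (Equiv.swap s t j))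
    (h : toLex (colCode p n m AY) < toLex (colCode p n m A)) :
    toLex (rowCode p n m AY) < toLex (rowCode p n m A) := by
  subst hAY
  obtain ⟨j0, hj0eq, hj0lt⟩ : ∃ j0 : Fin m,
      (∀ j, j < j0 → colCode p n m (fun i j => A i (Equiv.swap s t j)) j = colCode p n m A j) ∧
      colCode p n m (fun i j => A i (Equiv.swap s t j)) j0 < colCode p n m A j0 := h
  have hcol : ∀ j, colCode p n m (fun i j => A i (Equiv.swap s t j)) j
      = colCode p n m A (Equiv.swap s t j) := fun j => rfl
  -- j0 must be s or t
  have hj0mem : j0 = s ∨ j0 = t := by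
    by_contra hc
    push_neg at hc
    rw [hcol, Equiv.swap_apply_of_ne_of_ne hc.1 hc.2] at hj0lt
    exact lt_irrefl _ hj0lt
  obtain ⟨u, v, hvne, hswap, huprev, hvlt⟩ : ∃ u v : Fin m, u ≠ v ∧
      Equiv.swap s t = Equiv.swap u v ∧
      (∀ j, j < u → colCode p n m (fun i j => A i (Equiv.swap s t j)) j = colCode p n m A j) ∧
      colCode p n m A v < colCode p n m A u := by
    rcases hj0mem with h' | h'
    · refine ⟨s, t, hst, rfl, ?_, ?_⟩
      · exact fun j hj => hj0eq j (by rw [h']; exact hj)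
      · rw [hcol, h', Equiv.swap_apply_left] at hj0lt; exact hj0lt
    · refine ⟨t, s, hst.symm, Equiv.swap_comm s t, ?_, ?_⟩
      · exact fun j hj => hj0eq j (by rw [h']; exact hj)
      · rw [hcol, h', Equiv.swap_apply_right] at hj0lt; exact hj0lt
  have huv : u < v := by
    rcases lt_trichotomy u v with h' | h' | h'
    · exact h'
    · exact absurd h' hvne
    · exfalso
      have hx := huprev v h'
      rw [hcol, hswap, Equiv.swap_apply_right] at hx
      rw [hx] at hvlt
      exact lt_irrefl _ hvlt
  -- first differing row
  obtain ⟨i0, hieq, hilt⟩ := exists_first_diff hp (fun i => (A i v : ℕ)) (fun i => (A i u : ℕ))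
    (fun i => (A i v).2) (fun i => (A i u).2) hvlt
  refine ⟨i0, ?_, ?_⟩
  · -- rows before i0 unchanged
    intro i hi
    show rowCode p n m (fun i j => A i (Equiv.swap s t j)) i = rowCode p n m A i
    unfold rowCode
    apply Finset.sum_congr rfl
    intro j _
    have hiuv : A i u = A i v := Fin.val_injective (hieq i hi).symm
    have hval : A i (Equiv.swap s t j) = A i j := by
      rw [hswap]
      rcases eq_or_ne j u with rfl | hju
      · rw [Equiv.swap_apply_left, hiuv]
      · rcases eq_or_ne j v with rfl | hjv
        · rw [Equiv.swap_apply_right, hiuv]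
        · rw [Equiv.swap_apply_of_ne_of_ne hju hjv]
    show ((A i (Equiv.swap s t j)) : ℕ) * p ^ (m - 1 - (j : ℕ))
        = (A i j : ℕ) * p ^ (m - 1 - (j : ℕ))
    rw [hval]
  · -- row i0 strictly decreases
    show rowCode p n m (fun i j => A i (Equiv.swap s t j)) i0 < rowCode p n m A i0
    unfold rowCode
    apply digitSum_lt_of_lex hp (fun j => ((A i0 (Equiv.swap s t j)) : ℕ))
      (fun j => (A i0 j : ℕ)) (fun j => (A i0 (Equiv.swap s t j)).2) u
    · intro j hj
      show ((A i0 (Equiv.swap s t j)) : ℕ) = (A i0 j : ℕ)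
      rw [hswap, Equiv.swap_apply_of_ne_of_ne (ne_of_lt hj) (ne_of_lt (hj.trans huv))]
    · show ((A i0 (Equiv.swap s t u)) : ℕ) < (A i0 u : ℕ)
      rw [hswap, Equiv.swap_apply_left]
      exact hilt
end

section
/- Let A be an n×m matrix with entries in {0,...,p-1}, and let Y_1,...,Y_t be column transpositions such that c(A Y_1 ⋯ Y_t) < c(A Y_1 ⋯ Y_{t-1}) < ⋯ < c(A Y_1) < c(A) lexicographically. Then r(A Y_1 ⋯ Y_t) < r(A) lexicographically. -/
lemma auxBound (p : ℕ) (hp : 1 ≤ p) (N : ℕ) (f : ℕ → ℕ) (hf : ∀ k, f k ≤ p - 1) :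
    ∑ k ∈ Finset.range N, f k * p ^ k < p ^ N := by
  induction N with
  | zero => simp
  | succ N ih =>
    rw [Finset.sum_range_succ, pow_succ]
    have h1 : f N * p ^ N ≤ (p - 1) * p ^ N := Nat.mul_le_mul_right _ (hf N)
    have h2 : (p - 1) * p ^ N + p ^ N = p ^ N * p := by
      have h3 : p - 1 + 1 = p := Nat.succ_pred_eq_of_pos hp
      calc (p - 1) * p ^ N + p ^ N = (p - 1 + 1) * p ^ N := by ring
        _ = p ^ N * p := by rw [h3]; ring
    omega

lemma tailBound (p n : ℕ) (hp : 1 ≤ p) (a : Fin n → Fin p) (i₀ : Fin n) :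
    ∑ i ∈ Finset.Ioi i₀, (a i : ℕ) * p ^ (n - 1 - (i : ℕ)) < p ^ (n - 1 - (i₀ : ℕ)) := by
  have hstep : ∑ i ∈ Finset.Ioi i₀, (a i : ℕ) * p ^ (n - 1 - (i : ℕ))
      ≤ ∑ i ∈ Finset.Ioi i₀, (p - 1) * p ^ (n - 1 - (i : ℕ)) := by
    apply Finset.sum_le_sum
    intro i _
    refine Nat.mul_le_mul_right _ ?_
    have := (a i).isLt
    omega
  have hinj : Set.InjOn (fun i : Fin n => n - 1 - (i : ℕ)) (Finset.Ioi i₀) := by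
    intro i hi j hj hij
    simp only [Finset.coe_Ioi, Set.mem_Ioi] at hi hj
    have hi' := i.isLt; have hj' := j.isLt
    ext
    simp only at hij
    omega
  have himg : ∑ i ∈ Finset.Ioi i₀, (p - 1) * p ^ (n - 1 - (i : ℕ))
      = ∑ k ∈ (Finset.Ioi i₀).image (fun i : Fin n => n - 1 - (i : ℕ)), (p - 1) * p ^ k := by
    rw [Finset.sum_image hinj]
  have hsub : (Finset.Ioi i₀).image (fun i : Fin n => n - 1 - (i : ℕ))
      ⊆ Finset.range (n - 1 - (i₀ : ℕ)) := by
    intro k hk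
    simp only [Finset.mem_image, Finset.mem_Ioi] at hk
    obtain ⟨i, hi, rfl⟩ := hk
    have := i.isLt
    have hlt : (i₀ : ℕ) < (i : ℕ) := hi
    simp only [Finset.mem_range]
    omega
  have hle2 : ∑ k ∈ (Finset.Ioi i₀).image (fun i : Fin n => n - 1 - (i : ℕ)), (p - 1) * p ^ k
      ≤ ∑ k ∈ Finset.range (n - 1 - (i₀ : ℕ)), (p - 1) * p ^ k :=
    Finset.sum_le_sum_of_subset hsub
  have hfin := auxBound p hp (n - 1 - (i₀ : ℕ)) (fun _ => p - 1) (fun _ => le_rfl)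
  calc ∑ i ∈ Finset.Ioi i₀, (a i : ℕ) * p ^ (n - 1 - (i : ℕ))
      ≤ ∑ i ∈ Finset.Ioi i₀, (p - 1) * p ^ (n - 1 - (i : ℕ)) := hstep
    _ = ∑ k ∈ (Finset.Ioi i₀).image (fun i : Fin n => n - 1 - (i : ℕ)), (p - 1) * p ^ k := himg
    _ ≤ ∑ k ∈ Finset.range (n - 1 - (i₀ : ℕ)), (p - 1) * p ^ k := hle2
    _ < p ^ (n - 1 - (i₀ : ℕ)) := hfin

/-- value order from digit-lex order -/
lemma valLt (p n : ℕ) (hp : 1 ≤ p) (a b : Fin n → Fin p) (i₀ : Fin n)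
    (h1 : ∀ i, i < i₀ → a i = b i) (h2 : (a i₀ : ℕ) < (b i₀ : ℕ)) :
    ∑ i : Fin n, (a i : ℕ) * p ^ (n - 1 - (i : ℕ)) < ∑ i : Fin n, (b i : ℕ) * p ^ (n - 1 - (i : ℕ)) := by
  classical
  have hsplit : ∀ c : Fin n → Fin p,
      ∑ i : Fin n, (c i : ℕ) * p ^ (n - 1 - (i : ℕ))
      = (∑ i ∈ Finset.Iio i₀, (c i : ℕ) * p ^ (n - 1 - (i : ℕ)))
        + (c i₀ : ℕ) * p ^ (n - 1 - (i₀ : ℕ))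
        + ∑ i ∈ Finset.Ioi i₀, (c i : ℕ) * p ^ (n - 1 - (i : ℕ)) := by
    intro c
    have : (Finset.univ : Finset (Fin n)) = Finset.Iio i₀ ∪ {i₀} ∪ Finset.Ioi i₀ := by
      ext i
      simp only [Finset.mem_univ, Finset.mem_union, Finset.mem_Iio, Finset.mem_singleton,
        Finset.mem_Ioi, true_iff]
      rcases lt_trichotomy i i₀ with h | h | h
      · tauto
      · tauto
      · tauto
    have d1 : Disjoint (Finset.Iio i₀) ({i₀} : Finset (Fin n)) := by simp
    have d2 : Disjoint (Finset.Iio i₀ ∪ {i₀}) (Finset.Ioi i₀) := by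
      rw [Finset.disjoint_left]
      intro i hi hi2
      simp only [Finset.mem_union, Finset.mem_Iio, Finset.mem_singleton] at hi
      simp only [Finset.mem_Ioi] at hi2
      rcases hi with h | h
      · exact absurd (h.trans hi2) (lt_irrefl _)
      · subst h; exact absurd hi2 (lt_irrefl _)
    rw [this, Finset.sum_union d2, Finset.sum_union d1, Finset.sum_singleton]
  rw [hsplit a, hsplit b]
  have heq : ∑ i ∈ Finset.Iio i₀, (a i : ℕ) * p ^ (n - 1 - (i : ℕ))
      = ∑ i ∈ Finset.Iio i₀, (b i : ℕ) * p ^ (n - 1 - (i : ℕ)) := by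
    apply Finset.sum_congr rfl
    intro i hi
    rw [h1 i (Finset.mem_Iio.mp hi)]
  have hb : ∑ i ∈ Finset.Ioi i₀, (b i : ℕ) * p ^ (n - 1 - (i : ℕ)) ≥ 0 := Nat.zero_le _
  have ha := tailBound p n hp a i₀
  have hmul : ((a i₀ : ℕ) + 1) * p ^ (n - 1 - (i₀ : ℕ)) ≤ (b i₀ : ℕ) * p ^ (n - 1 - (i₀ : ℕ)) :=
    Nat.mul_le_mul_right _ h2
  have hexp : ((a i₀ : ℕ) + 1) * p ^ (n - 1 - (i₀ : ℕ))
      = (a i₀ : ℕ) * p ^ (n - 1 - (i₀ : ℕ)) + p ^ (n - 1 - (i₀ : ℕ)) := by ring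
  omega

/-- converse: value order gives digit-lex order -/
lemma lexOfVal (p n : ℕ) (hp : 1 ≤ p) (a b : Fin n → Fin p)
    (h : ∑ i : Fin n, (a i : ℕ) * p ^ (n - 1 - (i : ℕ))
        < ∑ i : Fin n, (b i : ℕ) * p ^ (n - 1 - (i : ℕ))) :
    ∃ i₀ : Fin n, (∀ i, i < i₀ → a i = b i) ∧ (a i₀ : ℕ) < (b i₀ : ℕ) := by
  classical
  have hne : a ≠ b := by
    rintro rfl; exact lt_irrefl _ h
  have hsne : (Finset.univ.filter (fun i => a i ≠ b i)).Nonempty := by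
    rw [Function.ne_iff] at hne
    obtain ⟨i, hi⟩ := hne
    exact ⟨i, by simp [hi]⟩
  set s := Finset.univ.filter (fun i => a i ≠ b i) with hs
  set i₀ := s.min' hsne with hi₀
  have hmem : i₀ ∈ s := Finset.min'_mem s hsne
  have hne₀ : a i₀ ≠ b i₀ := by simpa [hs] using hmem
  have hpre : ∀ i, i < i₀ → a i = b i := by
    intro i hi
    by_contra hcon
    have : i₀ ≤ i := Finset.min'_le s i (by simp [hs, hcon])
    exact absurd (lt_of_lt_of_le hi this) (lt_irrefl _)
  refine ⟨i₀, hpre, ?_⟩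
  rcases lt_or_gt_of_ne (fun hh : (a i₀ : ℕ) = (b i₀ : ℕ) => hne₀ (Fin.ext hh)) with h1 | h1
  · exact h1
  · exact absurd (valLt p n hp b a i₀ (fun i hi => (hpre i hi).symm) h1) (not_lt_of_gt h)

lemma stepLemAux (p n m : ℕ) (hp : 2 ≤ p) (C : Fin n → Fin m → Fin p) (u v : Fin m)
    (huv : u < v)
    (hc : toLex (colCode p n m (fun i j => C i (Equiv.swap u v j))) < toLex (colCode p n m C)) :
    toLex (rowCode p n m (fun i j => C i (Equiv.swap u v j))) < toLex (rowCode p n m C) := by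
  classical
  have hne : u ≠ v := ne_of_lt huv
  have hp1 : 1 ≤ p := by omega
  set C' : Fin n → Fin m → Fin p := fun i j => C i (Equiv.swap u v j) with hC'
  have hcol : ∀ j, colCode p n m C' j = colCode p n m C (Equiv.swap u v j) := fun j => rfl
  obtain ⟨j₁, hjpre, hjlt⟩ := hc
  have hjlt' : colCode p n m C' j₁ < colCode p n m C j₁ := hjlt
  -- identify j₁ = u and colCode C v < colCode C u
  have hcv : colCode p n m C v < colCode p n m C u := by
    by_cases h1 : j₁ = u
    · subst h1
      rw [hcol, Equiv.swap_apply_left] at hjlt'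
      exact hjlt'
    · by_cases h2 : j₁ = v
      · subst h2
        have heq : colCode p n m C' u = colCode p n m C u := hjpre u huv
        rw [hcol, Equiv.swap_apply_left] at heq
        rw [hcol, Equiv.swap_apply_right] at hjlt'
        omega
      · exfalso
        rw [hcol, Equiv.swap_apply_of_ne_of_ne h1 h2] at hjlt'
        omega
  -- get the first row where columns u, v differ
  obtain ⟨i₀, hipre, hilt⟩ := lexOfVal p n hp1 (fun i => C i v) (fun i => C i u) hcv

  -- show rowCode C' < rowCode C lexicographically at i₀
  refine ⟨i₀, ?_, ?_⟩
  · intro i hi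
    have hrow : ∀ j, C' i j = C i j := by
      intro j
      show C i (Equiv.swap u v j) = C i j
      by_cases h1 : j = u
      · rw [h1, Equiv.swap_apply_left]
        exact hipre i hi
      · by_cases h2 : j = v
        · rw [h2, Equiv.swap_apply_right]
          exact (hipre i hi).symm
        · rw [Equiv.swap_apply_of_ne_of_ne h1 h2]
    show rowCode p n m C' i = rowCode p n m C i
    unfold rowCode
    apply Finset.sum_congr rfl
    intro j _
    rw [hrow j]
  · -- strict inequality at row i₀
    show rowCode p n m C' i₀ < rowCode p n m C i₀
    unfold rowCode
    have husplit : ∀ (F : Fin m → ℕ), ∑ j : Fin m, F j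
        = F u + F v + ∑ j ∈ (Finset.univ.erase u).erase v, F j := by
      intro F
      rw [← Finset.add_sum_erase _ F (Finset.mem_univ u),
        ← Finset.add_sum_erase _ F (Finset.mem_erase.mpr ⟨(Ne.symm hne), Finset.mem_univ v⟩)]
      ring
    rw [husplit (fun j => (C' i₀ j : ℕ) * p ^ (m - 1 - (j : ℕ))),
      husplit (fun j => (C i₀ j : ℕ) * p ^ (m - 1 - (j : ℕ)))]
    have hrest : ∑ j ∈ (Finset.univ.erase u).erase v, (C' i₀ j : ℕ) * p ^ (m - 1 - (j : ℕ))
        = ∑ j ∈ (Finset.univ.erase u).erase v, (C i₀ j : ℕ) * p ^ (m - 1 - (j : ℕ)) := by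
      apply Finset.sum_congr rfl
      intro j hj
      simp only [Finset.mem_erase] at hj
      have : C' i₀ j = C i₀ j := by
        show C i₀ (Equiv.swap u v j) = C i₀ j
        rw [Equiv.swap_apply_of_ne_of_ne hj.2.1 hj.1]
      rw [this]
    rw [hrest]
    have h1 : (C' i₀ u : ℕ) = (C i₀ v : ℕ) := by
      show ((C i₀ (Equiv.swap u v u) : ℕ)) = _
      rw [Equiv.swap_apply_left]
    have h2 : (C' i₀ v : ℕ) = (C i₀ u : ℕ) := by
      show ((C i₀ (Equiv.swap u v v) : ℕ)) = _
      rw [Equiv.swap_apply_right]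
    rw [h1, h2]
    have hexp : p ^ (m - 1 - (v : ℕ)) < p ^ (m - 1 - (u : ℕ)) := by
      apply Nat.pow_lt_pow_right (by omega)
      have h3 := v.isLt
      have h4 : (u : ℕ) < (v : ℕ) := huv
      omega
    apply Nat.add_lt_add_right
    nlinarith [hilt, hexp]

lemma stepLem (p n m : ℕ) (hp : 2 ≤ p) (C : Fin n → Fin m → Fin p) (u v : Fin m)
    (huv : u ≠ v)
    (hc : toLex (colCode p n m (fun i j => C i (Equiv.swap u v j))) < toLex (colCode p n m C)) :
    toLex (rowCode p n m (fun i j => C i (Equiv.swap u v j))) < toLex (rowCode p n m C) := by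
  rcases huv.lt_or_gt with h | h
  · exact stepLemAux p n m hp C u v h hc
  · rw [Equiv.swap_comm] at hc ⊢
    exact stepLemAux p n m hp C v u h hc


/-- if a chain of column transpositions strictly decreases `c` at
each step, then `r` of the final matrix is lexicographically smaller than `r(A)`. -/
theorem stmt6 (p n m t : ℕ) (hp : 2 ≤ p) (ht : 1 ≤ t)
    (A : Fin n → Fin m → Fin p)
    (B : Fin (t + 1) → Fin n → Fin m → Fin p)
    (hB0 : B 0 = A)
    (hstep : ∀ k : Fin t, ∃ u v : Fin m, u ≠ v ∧
      B k.succ = fun i j => B k.castSucc i (Equiv.swap u v j))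
    (hlt : ∀ k : Fin t,
      toLex (colCode p n m (B k.succ)) < toLex (colCode p n m (B k.castSucc))) :
    toLex (rowCode p n m (B (Fin.last t))) < toLex (rowCode p n m A) := by
  have hstep' : ∀ k : Fin t,
      toLex (rowCode p n m (B k.succ)) < toLex (rowCode p n m (B k.castSucc)) := by
    intro k
    obtain ⟨u, v, huv, hBk⟩ := hstep k
    have h := hlt k
    rw [hBk] at h ⊢
    exact stepLem p n m hp (B k.castSucc) u v huv h
  have hanti : StrictAnti (fun k : Fin (t + 1) => toLex (rowCode p n m (B k))) :=
    Fin.strictAnti_iff_succ_lt.mpr hstep'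
  have h0 : (0 : Fin (t + 1)) < Fin.last t := by
    rw [Fin.lt_def]
    simp [Fin.last]
    omega
  have h2 := hanti h0
  simp only at h2
  rw [hB0] at h2
  exact h2
end

section
/- Every canonical n×m matrix A with entries in {0,...,p-1} is semi-canonical: both r(A) and c(A) are weakly increasing. -/
lemma codeLtPow (p : ℕ) (hp : 1 ≤ p) : ∀ (N : ℕ) (d : Fin N → ℕ), (∀ i, d i < p) →
    (∑ i : Fin N, d i * p ^ (N - 1 - (i : ℕ))) < p ^ N := by
  intro N
  induction N with
  | zero => intro d _; simp
  | succ n ih =>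
    intro d hd
    rw [Fin.sum_univ_succ]
    have eexp : ∀ i : Fin n, (n + 1 - 1 - ((i.succ : Fin (n+1)) : ℕ)) = n - 1 - (i : ℕ) := by
      intro i; simp only [Fin.val_succ]; omega
    have htail : (∑ i : Fin n, d i.succ * p ^ (n + 1 - 1 - ((i.succ : Fin (n+1)) : ℕ))) < p ^ n := by
      simp only [eexp]
      exact ih (fun i => d i.succ) (fun i => hd i.succ)
    have h0 : ((0 : Fin (n+1)) : ℕ) = 0 := rfl
    calc d 0 * p ^ (n + 1 - 1 - ((0 : Fin (n+1)) : ℕ)) +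
          ∑ i : Fin n, d i.succ * p ^ (n + 1 - 1 - ((i.succ : Fin (n+1)) : ℕ))
        < d 0 * p ^ n + p ^ n := by
          rw [h0]; simp only [Nat.add_sub_cancel, Nat.sub_zero]
          exact Nat.add_lt_add_left htail _
      _ = (d 0 + 1) * p ^ n := by ring
      _ ≤ p * p ^ n := Nat.mul_le_mul_right _ (hd 0)
      _ = p ^ (n + 1) := by ring

lemma keyLt (p : ℕ) (hp : 1 ≤ p) : ∀ (N : ℕ) (d e : Fin N → ℕ), (∀ i, d i < p) →
    ∀ i0 : Fin N, (∀ i, i < i0 → d i = e i) → d i0 < e i0 →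
    (∑ i : Fin N, d i * p ^ (N - 1 - (i : ℕ))) < ∑ i : Fin N, e i * p ^ (N - 1 - (i : ℕ)) := by
  intro N
  induction N with
  | zero => intro _ _ _ i0; exact i0.elim0
  | succ n ih =>
    intro d e hd i0 hpre hi0
    rw [Fin.sum_univ_succ, Fin.sum_univ_succ]
    have eexp : ∀ i : Fin n, n + 1 - 1 - ((i.succ : Fin (n+1)) : ℕ) = n - 1 - (i : ℕ) := by
      intro i; simp only [Fin.val_succ]; omega
    have e0 : n + 1 - 1 - ((0 : Fin (n+1)) : ℕ) = n := rfl
    simp only [eexp, e0]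
    rcases Fin.eq_zero_or_eq_succ i0 with h0 | ⟨i, rfl⟩
    · subst h0
      have htail : (∑ i : Fin n, d i.succ * p ^ (n - 1 - (i : ℕ))) < p ^ n :=
        codeLtPow p hp n (fun i => d i.succ) (fun i => hd i.succ)
      calc d 0 * p ^ n + ∑ i : Fin n, d i.succ * p ^ (n - 1 - (i : ℕ))
          < d 0 * p ^ n + p ^ n := Nat.add_lt_add_left htail _
        _ = (d 0 + 1) * p ^ n := by ring
        _ ≤ e 0 * p ^ n := Nat.mul_le_mul_right _ hi0
        _ ≤ e 0 * p ^ n + ∑ i : Fin n, e i.succ * p ^ (n - 1 - (i : ℕ)) := Nat.le_add_right _ _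
    · have h00 : d 0 = e 0 := hpre 0 (Fin.succ_pos i)
      have hih := ih (fun t => d t.succ) (fun t => e t.succ) (fun t => hd t.succ) i
        (fun t ht => hpre t.succ (Fin.succ_lt_succ_iff.mpr ht)) hi0
      rw [h00]
      exact Nat.add_lt_add_left (by simpa using hih) _

/-- every canonical matrix is semi-canonical. -/
theorem stmt10 (p n m : ℕ) (hp : 2 ≤ p)
    (A : Fin n → Fin m → Fin p) (hA : Canonical p n m A) :
    SemiCanonical p n m A := by
  have hp1 : 1 ≤ p := le_trans (by norm_num) hp
  constructor
  · -- rows monotone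
    by_contra hmon
    rw [Monotone] at hmon
    push_neg at hmon
    obtain ⟨i, j, hij, hlt⟩ := hmon
    have hij' : i < j := lt_of_le_of_ne hij (by rintro rfl; exact lt_irrefl _ hlt)
    set B : Fin n → Fin m → Fin p := fun i' j' => A (Equiv.swap i j i') j' with hB
    have hBA : MatEquiv p n m B A := ⟨Equiv.swap i j, 1, fun _ _ => rfl⟩
    have hle := hA B hBA
    have hlt2 : toLex (rowCode p n m B) < toLex (rowCode p n m A) := by
      refine ⟨i, fun k hk => ?_, ?_⟩
      · have hk1 : k ≠ i := ne_of_lt hk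
        have hk2 : k ≠ j := ne_of_lt (lt_trans hk hij')
        show rowCode p n m B k = rowCode p n m A k
        simp only [hB, rowCode, Equiv.swap_apply_of_ne_of_ne hk1 hk2]
      · show rowCode p n m B i < rowCode p n m A i
        simp only [hB, rowCode, Equiv.swap_apply_left]
        exact hlt
    exact absurd hle hlt2.not_ge
  · -- columns monotone
    by_contra hmon
    rw [Monotone] at hmon
    push_neg at hmon
    obtain ⟨j, k, hjk, hlt⟩ := hmon
    have hjk' : j < k := lt_of_le_of_ne hjk (by rintro rfl; exact lt_irrefl _ hlt)
    -- find the first row where columns j and k differ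
    have hne : ∃ i : Fin n, A i j ≠ A i k := by
      by_contra h
      push_neg at h
      have : colCode p n m A j = colCode p n m A k := by
        unfold colCode
        exact Finset.sum_congr rfl (fun i _ => by rw [h i])
      rw [this] at hlt; exact lt_irrefl _ hlt
    classical
    set S : Finset (Fin n) := Finset.univ.filter (fun i => A i j ≠ A i k) with hS
    have hSne : S.Nonempty := by
      obtain ⟨i, hi⟩ := hne
      exact ⟨i, by simp [hS, hi]⟩
    set i0 : Fin n := S.min' hSne with hi0def
    have hi0S : A i0 j ≠ A i0 k := by
      have := S.min'_mem hSne
      simp only [hS, Finset.mem_filter] at this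
      exact this.2
    have hprefix : ∀ i : Fin n, i < i0 → A i j = A i k := by
      intro i hi
      by_contra hcon
      have : i ∈ S := by simp [hS, hcon]
      exact absurd (S.min'_le i this) (not_le.mpr hi)
    -- compare the digits at i0
    have hdig : (A i0 k : ℕ) < (A i0 j : ℕ) := by
      rcases lt_trichotomy ((A i0 j : ℕ)) ((A i0 k : ℕ)) with h | h | h
      · exfalso
        have : colCode p n m A j < colCode p n m A k := by
          unfold colCode
          exact keyLt p hp1 n (fun i => (A i j : ℕ)) (fun i => (A i k : ℕ))
            (fun i => (A i j).is_lt) i0 (fun i hi => congrArg Fin.val (hprefix i hi)) h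
        omega
      · exact absurd (Fin.val_injective h) hi0S
      · exact h
    -- swap columns j and k
    set B : Fin n → Fin m → Fin p := fun i' j' => A i' (Equiv.swap j k j') with hB
    have hBA : MatEquiv p n m B A := ⟨1, Equiv.swap j k, fun _ _ => rfl⟩
    have hle := hA B hBA
    have hlt2 : toLex (rowCode p n m B) < toLex (rowCode p n m A) := by
      refine ⟨i0, fun i hi => ?_, ?_⟩
      · show rowCode p n m B i = rowCode p n m A i
        unfold rowCode
        refine Finset.sum_congr rfl (fun j' _ => ?_)
        congr 2
        show A i (Equiv.swap j k j') = A i j'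
        rcases eq_or_ne j' j with rfl | h1
        · rw [Equiv.swap_apply_left]; exact (hprefix i hi).symm
        rcases eq_or_ne j' k with rfl | h2
        · rw [Equiv.swap_apply_right]; exact hprefix i hi
        · rw [Equiv.swap_apply_of_ne_of_ne h1 h2]
      · show rowCode p n m B i0 < rowCode p n m A i0
        unfold rowCode
        refine keyLt p hp1 m (fun j' => (B i0 j' : ℕ)) (fun j' => (A i0 j' : ℕ))
          (fun j' => (B i0 j').is_lt) j (fun j' hj' => ?_) ?_
        · have h1 : j' ≠ j := ne_of_lt hj'
          have h2 : j' ≠ k := ne_of_lt (lt_trans hj' hjk')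
          show ((A i0 (Equiv.swap j k j') : ℕ)) = (A i0 j' : ℕ)
          rw [Equiv.swap_apply_of_ne_of_ne h1 h2]
        · show ((A i0 (Equiv.swap j k j) : ℕ)) < (A i0 j : ℕ)
          rw [Equiv.swap_apply_left]
          exact hdig
    exact absurd hle hlt2.not_ge
end

section
/- If A is a canonical n×m matrix with entries in {0,...,p-1} and its first row has exactly s nonzero entries, then (p^s - 1)/(p - 1) ≤ x_1 ≤ p^s - 1, where x_1 is the base-p number encoded by the first row. -/
lemma geomNat (p s : ℕ) (hp : 1 ≤ p) :
    (∑ k ∈ Finset.range s, p ^ k) * (p - 1) = p ^ s - 1 := by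
  induction s with
  | zero => simp
  | succ n ih =>
    rw [Finset.sum_range_succ, add_mul, ih]
    have h2 : p ^ n * (p - 1) = p ^ (n + 1) - p ^ n := by
      rw [show p - 1 = Nat.pred p from rfl, Nat.mul_pred, pow_succ]
    have h1 : 1 ≤ p ^ n := Nat.one_le_pow _ _ hp
    have h3 : p ^ n ≤ p ^ (n + 1) := Nat.pow_le_pow_right hp (by omega)
    omega

lemma sumPowGe (p : ℕ) (hp : 1 ≤ p) : ∀ (t : ℕ) (E : Finset ℕ), E.card = t →
    ∑ k ∈ Finset.range t, p ^ k ≤ ∑ e ∈ E, p ^ e := by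
  intro t
  induction t with
  | zero => simp
  | succ n ih =>
    intro E hE
    have hne : E.Nonempty := Finset.card_pos.mp (by omega)
    set M := E.max' hne with hM
    have hMme : M ∈ E := E.max'_mem hne
    have hsub : E ⊆ Finset.range (M + 1) := by
      intro e he
      simp [Nat.lt_succ_iff]
      exact E.le_max' e he
    have hcard : n + 1 ≤ M + 1 := by
      have h := Finset.card_le_card hsub
      rw [hE, Finset.card_range] at h
      omega
    have hEC : (E.erase M).card = n := by
      rw [Finset.card_erase_of_mem hMme, hE]; omega
    calc ∑ k ∈ Finset.range (n+1), p ^ k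
        = (∑ k ∈ Finset.range n, p ^ k) + p ^ n := Finset.sum_range_succ _ _
      _ ≤ (∑ e ∈ E.erase M, p ^ e) + p ^ M :=
          Nat.add_le_add (ih _ hEC) (Nat.pow_le_pow_right hp (by omega))
      _ = ∑ e ∈ E, p ^ e := Finset.sum_erase_add _ _ hMme

lemma toLex_le_zero {n : ℕ} (hn : 0 < n) (f g : Fin n → ℕ)
    (h : toLex f ≤ toLex g) : f ⟨0, hn⟩ ≤ g ⟨0, hn⟩ := by
  rcases lt_or_eq_of_le h with h | h
  · obtain ⟨i, hlt, hi⟩ := h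
    rcases eq_or_ne i ⟨0, hn⟩ with rfl | hne
    · exact le_of_lt hi
    · have : (⟨0, hn⟩ : Fin n) < i := by
        cases i; simp_all [Fin.lt_def, Fin.ext_iff]; omega
      exact le_of_eq (hlt _ this)
  · exact le_of_eq (congrFun h _)

/-- for a canonical matrix whose first row has exactly `s` nonzero
entries, `(p^s - 1)/(p - 1) ≤ x₁ ≤ p^s - 1`. -/
theorem stmt14 (p n m : ℕ) (hp : 2 ≤ p) (hn : 0 < n)
    (A : Fin n → Fin m → Fin p) (hA : Canonical p n m A)
    (s : ℕ) (hs : s = (Finset.univ.filter fun j : Fin m => (A ⟨0, hn⟩ j : ℕ) ≠ 0).card) :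
    (p ^ s - 1) / (p - 1) ≤ rowCode p n m A ⟨0, hn⟩ ∧
      rowCode p n m A ⟨0, hn⟩ ≤ p ^ s - 1 := by
  set z : Fin n := ⟨0, hn⟩
  set S : Finset (Fin m) := Finset.univ.filter fun j : Fin m => (A z j : ℕ) ≠ 0 with hS
  have hsm : s ≤ m := by
    rw [hs]
    simpa using Finset.card_filter_le Finset.univ (fun j : Fin m => (A z j : ℕ) ≠ 0)
  have hp1 : 1 ≤ p := by omega
  have hdiv : (p ^ s - 1) / (p - 1) = ∑ k ∈ Finset.range s, p ^ k := by
    rw [← geomNat p s hp1, Nat.mul_div_cancel _ (by omega : 0 < p - 1)]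
  constructor
  · -- lower bound
    rw [hdiv]
    have h1 : ∑ j ∈ S, p ^ (m - 1 - (j : ℕ)) ≤ rowCode p n m A z := by
      unfold rowCode
      calc ∑ j ∈ S, p ^ (m - 1 - (j : ℕ))
          ≤ ∑ j ∈ S, (A z j : ℕ) * p ^ (m - 1 - (j : ℕ)) := by
            apply Finset.sum_le_sum
            intro j hj
            have hj0 : (A z j : ℕ) ≠ 0 := by
              have := hj; rw [hS, Finset.mem_filter] at this; exact this.2
            exact Nat.le_mul_of_pos_left _ (Nat.pos_of_ne_zero hj0)
        _ ≤ ∑ j : Fin m, (A z j : ℕ) * p ^ (m - 1 - (j : ℕ)) :=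
            Finset.sum_le_sum_of_subset (Finset.subset_univ S)
    refine le_trans ?_ h1
    have himg : ∑ j ∈ S, p ^ (m - 1 - (j : ℕ))
        = ∑ e ∈ S.image (fun j : Fin m => m - 1 - (j : ℕ)), p ^ e := by
      rw [Finset.sum_image]
      intro a _ b _ hab
      have hab' : m - 1 - (a : ℕ) = m - 1 - (b : ℕ) := hab
      have ha := a.isLt; have hb := b.isLt
      exact Fin.ext (by omega)
    rw [himg]
    apply sumPowGe p hp1
    rw [Finset.card_image_of_injOn, ← hs]
    intro a _ b _ hab
    have hab' : m - 1 - (a : ℕ) = m - 1 - (b : ℕ) := hab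
    have ha := a.isLt; have hb := b.isLt
    exact Fin.ext (by omega)
  · -- upper bound
    rcases Nat.eq_zero_or_pos s with hs0 | hspos
    · -- s = 0 : the first row is zero
      have hSempty : S = ∅ := Finset.card_eq_zero.mp (by omega)
      have hz : ∀ j, (A z j : ℕ) = 0 := by
        intro j
        by_contra hj
        have : j ∈ S := by rw [hS, Finset.mem_filter]; exact ⟨Finset.mem_univ _, hj⟩
        simp [hSempty] at this
      have : rowCode p n m A z = 0 := by
        unfold rowCode; simp [hz]
      rw [this, hs0]
      simp
    · have hm : 0 < m := by omega
      set T : Finset (Fin m) := Finset.Ici (⟨m - s, by omega⟩ : Fin m) with hT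
      have hTmem : ∀ j : Fin m, j ∈ T ↔ m - s ≤ (j : ℕ) := by
        intro j; rw [hT, Finset.mem_Ici]; rfl
      have hTcard : T.card = s := by
        rw [hT, Fin.card_Ici]; show m - (m - s) = s; omega
      have hcT : Fintype.card {j : Fin m // j ∈ T} = s := by
        rw [Fintype.card_coe, hTcard]
      have hcS : Fintype.card {j : Fin m // j ∈ S} = s := by
        rw [Fintype.card_coe, ← hs]
      have eT : {j : Fin m // j ∈ T} ≃ {j : Fin m // j ∈ S} :=
        Fintype.equivOfCardEq (by rw [hcT, hcS])
      have eC : {j : Fin m // j ∉ T} ≃ {j : Fin m // j ∉ S} :=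
        Fintype.equivOfCardEq (by
          rw [Fintype.card_subtype_compl, Fintype.card_subtype_compl, hcT, hcS])
      set τ : Equiv.Perm (Fin m) :=
        ((Equiv.sumCompl (· ∈ T)).symm.trans
          ((Equiv.sumCongr eT eC).trans (Equiv.sumCompl (· ∈ S)))) with hτ
      have hτpos : ∀ (j : Fin m) (hj : j ∈ T), τ j = (eT ⟨j, hj⟩ : Fin m) := by
        intro j hj
        rw [hτ]
        simp [Equiv.sumCompl_symm_apply_of_pos (p := (· ∈ T)) hj]
      have hτneg : ∀ (j : Fin m) (hj : j ∉ T), τ j = (eC ⟨j, hj⟩ : Fin m) := by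
        intro j hj
        rw [hτ]
        simp [Equiv.sumCompl_symm_apply_of_neg (p := (· ∈ T)) hj]
      set B : Fin n → Fin m → Fin p := fun i j => A i (τ j) with hB
      have hBA : MatEquiv p n m B A := ⟨1, τ, fun i j => rfl⟩
      have hle : rowCode p n m A z ≤ rowCode p n m B z :=
        toLex_le_zero hn _ _ (hA B hBA)
      refine le_trans hle ?_
      have hzero : ∀ j : Fin m, j ∉ T → (B z j : ℕ) = 0 := by
        intro j hj
        have h1 : τ j ∉ S := by
          rw [hτneg j hj]; exact (eC ⟨j, hj⟩).2
        rw [hS, Finset.mem_filter] at h1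
        push_neg at h1
        simpa [hB] using h1 (Finset.mem_univ _)
      have h2 : rowCode p n m B z = ∑ j ∈ T, (B z j : ℕ) * p ^ (m - 1 - (j : ℕ)) := by
        unfold rowCode
        refine (Finset.sum_subset (Finset.subset_univ T) ?_).symm
        intro j _ hj
        rw [hzero j hj, zero_mul]
      rw [h2]
      calc ∑ j ∈ T, (B z j : ℕ) * p ^ (m - 1 - (j : ℕ))
          ≤ ∑ j ∈ T, (p - 1) * p ^ (m - 1 - (j : ℕ)) := by
            apply Finset.sum_le_sum
            intro j _
            have := (B z j).isLt
            exact Nat.mul_le_mul_right _ (by omega)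
        _ = ∑ k ∈ Finset.range s, (p - 1) * p ^ k := by
            apply Finset.sum_nbij' (i := fun j : Fin m => m - 1 - (j : ℕ))
              (j := fun k => (⟨m - 1 - k, by omega⟩ : Fin m))
            · intro j hj
              rw [hTmem] at hj
              have := j.isLt
              rw [Finset.mem_range]
              omega
            · intro k hk
              rw [Finset.mem_range] at hk
              rw [hTmem]
              show m - s ≤ m - 1 - k
              omega
            · intro j hj
              rw [hTmem] at hj
              have := j.isLt
              exact Fin.ext (by simp; omega)
            · intro k hk
              rw [Finset.mem_range] at hk
              show m - 1 - (m - 1 - k) = k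
              omega
            · intro j _
              rfl
        _ = p ^ s - 1 := by
            rw [← Finset.mul_sum, mul_comm, geomNat p s hp1]
end

section
/- If A is a canonical n×m matrix with entries in {0,...,p-1}, then for every row i, the number of nonzero entries in the first row is at most the number of nonzero entries in the i-th row: ν_1(A) ≤ ν_i(A). -/
theorem lex_head (n : ℕ) (hn : 0 < n) (f g : Fin n → ℕ) (h : toLex f ≤ toLex g) :
    f ⟨0, hn⟩ ≤ g ⟨0, hn⟩ := by
  rcases h.lt_or_eq with h | h
  · obtain ⟨k, hk, hlt⟩ := h
    have h0 : (⟨0, hn⟩ : Fin n) ≤ k := Fin.le_def.mpr (Nat.zero_le _)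
    rcases eq_or_lt_of_le h0 with hk0 | hk0
    · exact le_of_lt (hk0 ▸ hlt)
    · exact le_of_eq (hk _ hk0)
  · exact le_of_eq (congrFun (congrArg ofLex h) _)

theorem geom_aux (p : ℕ) (hp : 1 ≤ p) : ∀ c : ℕ,
    (p - 1) * ∑ t ∈ Finset.range c, p ^ t + 1 = p ^ c := by
  intro c
  induction c with
  | zero => simp
  | succ c ih =>
    rw [Finset.sum_range_succ, Nat.mul_add, pow_succ, Nat.sub_one_mul p (p^c),
      mul_comm (p ^ c) p]
    have h2 : p ^ c ≤ p * p ^ c := Nat.le_mul_of_pos_left _ hp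
    omega

theorem sum_pow_lb (p : ℕ) (hp : 1 ≤ p) (T : Finset ℕ) :
    ∑ t ∈ Finset.range T.card, p ^ t ≤ ∑ t ∈ T, p ^ t := by
  induction T using Finset.induction_on_max with
  | empty => simp
  | insert a s ha ih =>
    have hsub : s ⊆ Finset.range a := fun x hx => Finset.mem_range.mpr (ha x hx)
    have hcard : s.card ≤ a := by simpa using Finset.card_le_card hsub
    have hmem : a ∉ s := fun h => lt_irrefl a (ha a h)
    rw [Finset.card_insert_of_notMem hmem, Finset.sum_insert hmem, Finset.sum_range_succ,
      add_comm (p ^ a)]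
    exact Nat.add_le_add ih (Nat.pow_le_pow_right hp hcard)

theorem row_lb (p m : ℕ) (hp : 1 ≤ p) (v : Fin m → Fin p) :
    ∑ t ∈ Finset.range (Finset.univ.filter fun j : Fin m => (v j : ℕ) ≠ 0).card, p ^ t ≤
      ∑ j : Fin m, (v j : ℕ) * p ^ (m - 1 - (j : ℕ)) := by
  classical
  set S := Finset.univ.filter fun j : Fin m => (v j : ℕ) ≠ 0 with hS
  have h1 : ∑ j ∈ S, p ^ (m - 1 - (j : ℕ)) ≤ ∑ j : Fin m, (v j : ℕ) * p ^ (m - 1 - (j : ℕ)) := by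
    calc ∑ j ∈ S, p ^ (m - 1 - (j : ℕ))
        ≤ ∑ j ∈ S, (v j : ℕ) * p ^ (m - 1 - (j : ℕ)) := by
          apply Finset.sum_le_sum
          intro j hj
          have : (v j : ℕ) ≠ 0 := (Finset.mem_filter.mp hj).2
          exact Nat.le_mul_of_pos_left _ (Nat.pos_of_ne_zero this)
      _ ≤ ∑ j : Fin m, (v j : ℕ) * p ^ (m - 1 - (j : ℕ)) :=
          Finset.sum_le_sum_of_subset (Finset.subset_univ S)
  have hinj : Set.InjOn (fun j : Fin m => m - 1 - (j : ℕ)) S := by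
    intro a _ b _ hab
    have ha := a.isLt
    have hb := b.isLt
    exact Fin.ext (by simp only at hab; omega)
  have h2 : ∑ j ∈ S, p ^ (m - 1 - (j : ℕ))
      = ∑ t ∈ S.image (fun j : Fin m => m - 1 - (j : ℕ)), p ^ t :=
    (Finset.sum_image (fun a ha b hb h => hinj ha hb h)).symm
  have h3 : (S.image (fun j : Fin m => m - 1 - (j : ℕ))).card = S.card :=
    Finset.card_image_of_injOn hinj
  calc ∑ t ∈ Finset.range S.card, p ^ t
      = ∑ t ∈ Finset.range (S.image (fun j : Fin m => m - 1 - (j : ℕ))).card, p ^ t := by rw [h3]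
    _ ≤ ∑ t ∈ S.image (fun j : Fin m => m - 1 - (j : ℕ)), p ^ t := sum_pow_lb p hp _
    _ = ∑ j ∈ S, p ^ (m - 1 - (j : ℕ)) := h2.symm
    _ ≤ _ := h1

/-- in a canonical matrix, the first row has at most as many
nonzero entries as any other row. -/
theorem stmt15 (p n m : ℕ) (hp : 2 ≤ p) (hn : 0 < n)
    (A : Fin n → Fin m → Fin p) (hA : Canonical p n m A) (i : Fin n) :
    (Finset.univ.filter fun j : Fin m => (A ⟨0, hn⟩ j : ℕ) ≠ 0).card ≤
      (Finset.univ.filter fun j : Fin m => (A i j : ℕ) ≠ 0).card := by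
  classical
  have hp1 : 1 ≤ p := by omega
  set z : Fin n := ⟨0, hn⟩ with hz
  set S : Finset (Fin m) := Finset.univ.filter (fun j => (A i j : ℕ) ≠ 0) with hS
  set c := S.card with hc
  by_contra hcon
  push_neg at hcon
  set E : Finset (Fin m) := Finset.univ.filter (fun j : Fin m => m - c ≤ (j : ℕ)) with hE
  have hcm : c ≤ m := by
    have := Finset.card_le_card (Finset.subset_univ S)
    simpa using this
  have hEcard : E.card = c := by
    have himg : E.image Fin.val = Finset.Ico (m - c) m := by
      ext t
      simp only [hE, Finset.mem_image, Finset.mem_filter, Finset.mem_univ, true_and,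
        Finset.mem_Ico]
      constructor
      · rintro ⟨j, hj, rfl⟩; exact ⟨hj, j.isLt⟩
      · rintro ⟨h1, h2⟩; exact ⟨⟨t, h2⟩, h1, rfl⟩
    have hcardimg : (E.image Fin.val).card = E.card :=
      Finset.card_image_of_injOn (Fin.val_injective.injOn)
    rw [← hcardimg, himg, Nat.card_Ico]
    omega
  have hcardeq : Fintype.card {x // x ∈ E} = Fintype.card {x // x ∈ S} := by
    simp only [Fintype.card_coe, hEcard, hc]
  let e : {x // x ∈ E} ≃ {x // x ∈ S} := Fintype.equivOfCardEq hcardeq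
  let τ : Equiv.Perm (Fin m) := e.extendSubtype
  let σ : Equiv.Perm (Fin n) := Equiv.swap z i
  have hB := hA (fun i' j => A (σ i') (τ j)) ⟨σ, τ, fun _ _ => rfl⟩
  have hhead := lex_head n hn _ _ hB
  have hσz : σ z = i := Equiv.swap_apply_left z i
  simp only [rowCode, hσz] at hhead
  -- upper bound for the right-hand side
  have hzero : ∀ j : Fin m, j ∉ E → (A i (τ j) : ℕ) = 0 := by
    intro j hj
    have hns : ¬ (τ j ∈ S) := e.extendSubtype_not_mem j hj
    simp only [hS, Finset.mem_filter, Finset.mem_univ, true_and, not_not] at hns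
    exact hns
  have hsplit : ∑ j : Fin m, (A i (τ j) : ℕ) * p ^ (m - 1 - (j : ℕ))
      = ∑ j ∈ E, (A i (τ j) : ℕ) * p ^ (m - 1 - (j : ℕ)) :=
    (Finset.sum_subset (Finset.subset_univ E)
      (fun j _ hj => by rw [hzero j hj, zero_mul])).symm
  have hEsum : ∑ j ∈ E, p ^ (m - 1 - (j : ℕ)) = ∑ t ∈ Finset.range c, p ^ t := by
    refine Finset.sum_bij' (fun (j : Fin m) (_ : j ∈ E) => m - 1 - (j : ℕ))
      (fun (t : ℕ) (ht : t ∈ Finset.range c) =>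
        (⟨m - 1 - t, by have := Finset.mem_range.mp ht; omega⟩ : Fin m)) ?_ ?_ ?_ ?_ ?_
    · intro a ha
      have h1 : m - c ≤ (a : ℕ) := (Finset.mem_filter.mp ha).2
      have h2 := a.isLt
      simp only [Finset.mem_range]
      omega
    · intro t ht
      have h1 := Finset.mem_range.mp ht
      refine Finset.mem_filter.mpr ⟨Finset.mem_univ _, ?_⟩
      simp only
      omega
    · intro a ha
      have h1 : m - c ≤ (a : ℕ) := (Finset.mem_filter.mp ha).2
      have h2 := a.isLt
      apply Fin.ext
      simp only
      omega
    · intro t ht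
      have h1 := Finset.mem_range.mp ht
      simp only
      omega
    · intro a _
      rfl
  have hub : ∑ j : Fin m, (A i (τ j) : ℕ) * p ^ (m - 1 - (j : ℕ))
      ≤ (p - 1) * ∑ t ∈ Finset.range c, p ^ t := by
    rw [hsplit, ← hEsum, Finset.mul_sum]
    apply Finset.sum_le_sum
    intro j _
    exact Nat.mul_le_mul_right _ (by have := (A i (τ j)).isLt; omega)
  -- lower bound for the left-hand side
  have hlb := row_lb p m hp1 (A z)
  have hpc : p ^ c ≤ ∑ t ∈ Finset.range
      (Finset.univ.filter fun j : Fin m => (A z j : ℕ) ≠ 0).card, p ^ t :=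
    Finset.single_le_sum (f := fun t => p ^ t) (fun _ _ => Nat.zero_le _)
      (Finset.mem_range.mpr hcon)
  rw [show (⟨0, hn⟩ : Fin n) = z from rfl] at hhead
  have hfin : p ^ c ≤ (p - 1) * ∑ t ∈ Finset.range c, p ^ t :=
    hpc.trans (hlb.trans (hhead.trans hub))
  have hgeom := geom_aux p hp1 c
  omega
end
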